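/- Let B be a topological group and let A be a subgroup of B equipped with a topology making A a topological group and such that the inclusion map A → B is continuous. Then the following two conditions are equivalent: (I) A is a normal subgroup of B and the map φ : A × B → A defined by φ(a,b) = b⁻¹ a b is continuous (where A carries its given topology); (II) for every open subset U of A: (a) for each b ∈ B the set bUb⁻¹ is contained in A and is an open subset of A, and (b) for each a ∈ U there exist an open subset V of B with 1 ∈ V and an open subset U_a of A with a ∈ U_a such that for every b ∈ V one has b⁻¹ U_a b ⊆ U. -/

import Mathlib

open Topology

/-- For a subgroup `A` of a topological group `B`, carrying its own group topology `tA`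
with continuous inclusion into `B`, the following are equivalent:
(I) `A` is normal in `B` and the conjugation map `φ : A × B → A`, `(a, b) ↦ b⁻¹ * a * b`,
is continuous;
(II) for every `tA`-open `U ⊆ A`: (a) for each `b : B` the set `bUb⁻¹` is contained in `A`
and is open in `A`, and (b) for each `a ∈ U` there are an open `V ⊆ B` with `1 ∈ V` and a
`tA`-open `U_a ⊆ A` with `a ∈ U_a` such that `b⁻¹ U_a b ⊆ U` for all `b ∈ V`. -/
theorem stmt0 {B : Type*} [Group B] [TopologicalSpace B] [IsTopologicalGroup B]
    (A : Subgroup B) (tA : TopologicalSpace A)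
    (_ : @IsTopologicalGroup A tA _)
    (hincl : Continuous[tA, inferInstance] (fun a : A => (a : B))) :
    (A.Normal ∧ ∀ φ : A × B → A,
        (∀ p : A × B, (φ p : B) = p.2⁻¹ * (p.1 : B) * p.2) →
        Continuous[@instTopologicalSpaceProd A B tA inferInstance, tA] φ) ↔
    (∀ U : Set A, IsOpen[tA] U →
      ((∀ b : B, (fun u : A => b * (u : B) * b⁻¹) '' U ⊆ (A : Set B) ∧
          IsOpen[tA] {x : A | (x : B) ∈ (fun u : A => b * (u : B) * b⁻¹) '' U}) ∧
        (∀ a ∈ U, ∃ V : Set B, IsOpen V ∧ (1 : B) ∈ V ∧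
          ∃ Ua : Set A, IsOpen[tA] Ua ∧ a ∈ Ua ∧
            ∀ b ∈ V, (fun u : A => b⁻¹ * (u : B) * b) '' Ua ⊆ Subtype.val '' U))) := by
  letI := tA
  constructor
  · rintro ⟨hnorm, hφ⟩
    have hmem : ∀ p : A × B, p.2⁻¹ * (p.1 : B) * p.2 ∈ A := fun p => by
      simpa using hnorm.conj_mem _ p.1.2 p.2⁻¹
    set φ : A × B → A := fun p => ⟨p.2⁻¹ * (p.1 : B) * p.2, hmem p⟩ with hφdef
    have hprop : ∀ p : A × B, (φ p : B) = p.2⁻¹ * (p.1 : B) * p.2 := fun p => rfl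
    have hcont : Continuous φ := hφ φ hprop
    intro U hU
    constructor
    · intro b
      constructor
      · rintro x ⟨u, _, rfl⟩
        exact hnorm.conj_mem _ u.2 b
      · have hset : {x : A | (x : B) ∈ (fun u : A => b * (u : B) * b⁻¹) '' U}
            = (fun a : A => φ (a, b)) ⁻¹' U := by
          ext x
          simp only [Set.mem_setOf_eq, Set.mem_preimage, Set.mem_image]
          constructor
          · rintro ⟨u, hu, hx⟩
            have hxu : φ (x, b) = u := by
              apply Subtype.ext
              rw [hprop]
              simp only
              rw [← hx]; group
            rwa [hxu]
          · intro hx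
            exact ⟨φ (x, b), hx, by rw [hprop]; group⟩
        rw [hset]
        exact (hcont.comp (continuous_id.prodMk continuous_const)).isOpen_preimage U hU
    · intro a ha
      have h1 : φ (a, 1) = a := Subtype.ext (by rw [hprop]; simp)
      have hmem1 : (a, (1 : B)) ∈ φ ⁻¹' U := by
        simp only [Set.mem_preimage, h1]; exact ha
      have hopen := hcont.isOpen_preimage U hU
      rcases isOpen_prod_iff.mp hopen a 1 hmem1 with ⟨u, v, hu, hv, hau, h1v, huv⟩
      refine ⟨v, hv, h1v, u, hu, hau, fun b hb => ?_⟩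
      rintro x ⟨y, hy, rfl⟩
      exact ⟨φ (y, b), huv ⟨hy, hb⟩, (hprop (y, b)).symm ▸ rfl⟩
  · intro h
    have hnorm : A.Normal := by
      constructor
      intro n hn g
      exact ((h Set.univ isOpen_univ).1 g).1 ⟨⟨n, hn⟩, trivial, rfl⟩
    refine ⟨hnorm, fun φ hprop => ?_⟩
    have hψ : ∀ b : B, Continuous (fun a : A => φ (a, b)) := by
      intro b
      rw [continuous_def]
      intro U hU
      have hopen := ((h U hU).1 b).2
      have hset : (fun a : A => φ (a, b)) ⁻¹' U
          = {x : A | (x : B) ∈ (fun u : A => b * (u : B) * b⁻¹) '' U} := by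
        ext x
        simp only [Set.mem_preimage, Set.mem_setOf_eq, Set.mem_image]
        constructor
        · intro hx
          exact ⟨φ (x, b), hx, by rw [hprop]; simp only; group⟩
        · rintro ⟨u, hu, hx⟩
          have hxu : φ (x, b) = u := by
            apply Subtype.ext
            rw [hprop]
            simp only
            rw [← hx]; group
          rwa [hxu]
      rw [hset]; exact hopen
    rw [continuous_def]
    intro U hU
    rw [isOpen_prod_iff]
    intro a b hab
    rcases (h U hU).2 (φ (a, b)) hab with ⟨V, hV, h1V, Ua, hUa, haUa, hVUa⟩
    refine ⟨(fun x : A => φ (x, b)) ⁻¹' Ua, (fun c => b * c) '' V,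
      (hψ b).isOpen_preimage _ hUa, ?_, haUa, ⟨1, h1V, by simp⟩, ?_⟩
    · exact (Homeomorph.mulLeft b).isOpen_image.mpr hV
    · rintro ⟨x, y⟩ ⟨hx, c, hc, rfl⟩
      rcases hVUa c hc ⟨φ (x, b), hx, rfl⟩ with ⟨u, hu, hequ⟩
      have hxu : φ (x, b * c) = u := by
        apply Subtype.ext
        simp only [hprop] at hequ ⊢
        rw [hequ]; group
      simpa only [Set.mem_preimage, hxu] using hu
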